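/- There is no closed knight's tour on the 4 × n chessboard for any n ≥ 1. -/

import Mathlib

/-- A knight move in `k` dimensions: coordinates differ in exactly two places,
one by `±1` and one by `±2`. -/
def knightMove {k : ℕ} (a b : Fin k → ℤ) : Prop :=
  ∃ i j : Fin k, i ≠ j ∧ |a i - b i| = 1 ∧ |a j - b j| = 2 ∧
    ∀ l, l ≠ i → l ≠ j → a l = b l

/-- Membership in the board `∏ [1, n i]`. -/
def onBoard {k : ℕ} (n : Fin k → ℕ) (a : Fin k → ℤ) : Prop :=
  ∀ i, 1 ≤ a i ∧ a i ≤ (n i : ℤ)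

/-- The knight graph on the board `∏ [1, n i]`. -/
def knightGraph {k : ℕ} (n : Fin k → ℕ) :
    SimpleGraph {a : Fin k → ℤ // onBoard n a} where
  Adj x y := knightMove x.1 y.1
  symm := by
    constructor
    rintro x y ⟨i, j, hij, h1, h2, h3⟩
    exact ⟨i, j, hij, by rwa [abs_sub_comm], by rwa [abs_sub_comm],
      fun l hli hlj => (h3 l hli hlj).symm⟩
  loopless := by
    constructor
    rintro x ⟨i, j, hij, h1, h2, h3⟩
    simp at h1

/-- Existence of a closed knight's tour (Hamiltonian cycle of the knight graph). -/
def HasClosedTour {k : ℕ} (n : Fin k → ℕ) : Prop :=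
  ∃ (x : {a : Fin k → ℤ // onBoard n a}) (w : (knightGraph n).Walk x x),
    w.IsHamiltonianCycle

/- ### Auxiliary material -/

section Aux

open SimpleGraph

/-- Extract the two-coordinate description of a knight move in 2 dimensions. -/
lemma knightMove_diff {a b : Fin 2 → ℤ} (h : knightMove a b) :
    (|a 0 - b 0| = 1 ∧ |a 1 - b 1| = 2) ∨ (|a 0 - b 0| = 2 ∧ |a 1 - b 1| = 1) := by
  obtain ⟨i, j, hij, h1, h2, _⟩ := h
  fin_cases i <;> fin_cases j <;> simp_all

lemma knightMove_cases {a b : Fin 2 → ℤ} (h : knightMove a b) :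
    ((a 0 - b 0 = 1 ∨ a 0 - b 0 = -1) ∧ (a 1 - b 1 = 2 ∨ a 1 - b 1 = -2)) ∨
    ((a 0 - b 0 = 2 ∨ a 0 - b 0 = -2) ∧ (a 1 - b 1 = 1 ∨ a 1 - b 1 = -1)) := by
  rcases knightMove_diff h with ⟨h1, h2⟩ | ⟨h1, h2⟩
  · exact Or.inl ⟨(abs_eq (by norm_num)).mp h1, (abs_eq (by norm_num)).mp h2⟩
  · exact Or.inr ⟨(abs_eq (by norm_num)).mp h1, (abs_eq (by norm_num)).mp h2⟩

variable {n : ℕ}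

/-- The vertex type of the `4 × n` board. -/
local notation "V4" => {a : Fin 2 → ℤ // onBoard ![4, n] a}

lemma row_bounds (a : V4) : 1 ≤ a.1 0 ∧ a.1 0 ≤ 4 := by
  have := a.2 0; simpa using this

lemma col_bounds (a : V4) : 1 ≤ a.1 1 ∧ a.1 1 ≤ (n : ℤ) := by
  have := a.2 1; simpa using this

/-- "outer" rows are rows 1 and 4. -/
def isOuter (a : V4) : Prop := a.1 0 = 1 ∨ a.1 0 = 4

instance : DecidablePred (isOuter (n := n)) := fun _ => inferInstanceAs (Decidable (_ ∨ _))

/-- No knight move joins two outer squares. -/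
lemma no_outer_outer {u v : V4} (h : (knightGraph ![4, n]).Adj u v) :
    ¬ (isOuter u ∧ isOuter v) := by
  have hd := knightMove_cases h
  have hu := row_bounds u
  have hv := row_bounds v
  rintro ⟨h1, h2⟩
  unfold isOuter at h1 h2
  rcases hd with ⟨hr, _⟩ | ⟨hr, _⟩ <;> omega

/-- A knight move flips the checkerboard parity. -/
lemma parity_flip {u v : V4} (h : (knightGraph ![4, n]).Adj u v) :
    ¬ (Even (u.1 0 + u.1 1) ↔ Even (v.1 0 + v.1 1)) := by
  have hd := knightMove_cases h
  simp only [Int.even_iff] at *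
  rcases hd with ⟨hr, hc⟩ | ⟨hr, hc⟩ <;> omega

/-- The weight function: `+1` on outer squares, `-1` on inner squares. -/
noncomputable def wt (a : V4) : ℤ := if isOuter a then 1 else -1

/-- Row-flipping involution 1↔2, 3↔4. -/
def flipRow (r : ℤ) : ℤ := if r = 1 then 2 else if r = 2 then 1 else if r = 3 then 4 else 3

/-- The row-flipping map on the board. -/
def flipV (a : V4) : V4 :=
  ⟨![flipRow (a.1 0), a.1 1], by
    intro i
    fin_cases i
    · have := row_bounds a
      simp only [Matrix.cons_val_zero, Matrix.cons_val_one, Matrix.head_cons, flipRow]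
      split_ifs <;> norm_num
    · simpa using col_bounds a⟩

lemma flipV_flipV (a : V4) : flipV (flipV a) = a := by
  have hb := row_bounds a
  apply Subtype.ext
  funext i
  fin_cases i <;>
    simp only [flipV, flipRow, Matrix.cons_val_zero, Matrix.cons_val_one, Matrix.head_cons]
  · have h : a.1 0 = 1 ∨ a.1 0 = 2 ∨ a.1 0 = 3 ∨ a.1 0 = 4 := by omega
    rcases h with h | h | h | h <;> simp [h]
  · rfl

lemma isOuter_flipV (a : V4) : isOuter (flipV a) ↔ ¬ isOuter a := by
  have hb := row_bounds a
  have h : a.1 0 = 1 ∨ a.1 0 = 2 ∨ a.1 0 = 3 ∨ a.1 0 = 4 := by omega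
  unfold isOuter flipV flipRow
  rcases h with h | h | h | h <;> simp [h]

lemma wt_flipV (a : V4) : wt (flipV a) = - wt a := by
  by_cases h : isOuter a
  · have h' : ¬ isOuter (flipV a) := by rw [isOuter_flipV]; simpa
    simp [wt, h, h']
  · have h' : isOuter (flipV a) := (isOuter_flipV a).mpr h
    simp [wt, h, h']

lemma list_sum_nonpos : ∀ (l : List ℤ), (∀ x ∈ l, x ≤ 0) → l.sum ≤ 0 := by
  intro l
  induction l with
  | nil => simp
  | cons a t ih =>
    intro h
    have h1 := ih (fun y hy => h y (List.mem_cons_of_mem _ hy))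
    have h2 := h a List.mem_cons_self
    simp only [List.sum_cons]
    omega

/-- A list of nonpositive integers summing to zero consists of zeros. -/
lemma list_sum_zero : ∀ (l : List ℤ), (∀ x ∈ l, x ≤ 0) → l.sum = 0 → ∀ x ∈ l, x = 0 := by
  intro l
  induction l with
  | nil => simp
  | cons a t ih =>
    intro hle hsum x hx
    have hts : t.sum ≤ 0 := list_sum_nonpos t (fun y hy => hle y (List.mem_cons_of_mem _ hy))
    have ha : a ≤ 0 := hle a (by simp)
    simp only [List.sum_cons] at hsum
    have ha0 : a = 0 := by omega
    have ht0 : t.sum = 0 := by omega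
    rcases List.mem_cons.mp hx with rfl | hx
    · exact ha0
    · exact ih (fun y hy => hle y (by simp [hy])) ht0 x hx

/-- Propagate a dart-invariant boolean along a walk. -/
lemma walk_const {α : Type*} {G : SimpleGraph α} {q : α → Bool} :
    ∀ {a b : α} (p : G.Walk a b), (∀ d ∈ p.darts, q d.fst = q d.snd) →
      ∀ v ∈ p.support, q v = q a := by
  intro a b p
  induction p with
  | nil => simp
  | @cons u c b h p ih =>
    intro H v hv
    have hhead : q u = q c := H ⟨(u, c), h⟩ (by
      rw [SimpleGraph.Walk.darts_cons]; exact List.mem_cons_self)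
    rcases List.mem_cons.mp (by simpa [SimpleGraph.Walk.support_cons] using hv) with rfl | hv'
    · rfl
    · have := ih (fun d hd => H d (by
        rw [SimpleGraph.Walk.darts_cons]; exact List.mem_cons_of_mem _ hd)) v hv'
      rw [this, ← hhead]

/-- For a closed walk, the sums of a function over `support.dropLast` and
`support.tail` agree. -/
lemma closed_sum {α : Type*} {G : SimpleGraph α} {x : α} (w : G.Walk x x)
    (hw : ¬ w.Nil) (f : α → ℤ) :
    (w.support.dropLast.map f).sum = (w.support.tail.map f).sum := by
  have hsup : w.support = x :: w.support.tail := w.support_eq_cons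
  have htne : w.support.tail ≠ [] := by
    cases w with
    | nil => exact absurd SimpleGraph.Walk.Nil.nil hw
    | cons h p =>
      simp only [SimpleGraph.Walk.support_cons, List.tail_cons]
      exact p.support_ne_nil
  have hlast : w.support.tail.getLast htne = x := by
    rw [List.getLast_tail]
    exact w.getLast_support
  have h2 : w.support.tail = w.support.tail.dropLast ++ [x] := by
    conv_lhs => rw [← List.dropLast_append_getLast htne]
    rw [hlast]
  have h3 : w.support.dropLast = x :: w.support.tail.dropLast := by
    conv_lhs => rw [hsup]
    exact List.dropLast_cons_of_ne_nil htne
  rw [h2, h3]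
  simp only [List.map_cons, List.map_append, List.sum_cons, List.sum_append,
    List.map_nil, List.sum_nil]
  ring

end Aux

open SimpleGraph

/-- There is no closed knight's tour on the `4 × n` chessboard. -/
theorem no_tour_four_by_n (n : ℕ) (hn : 1 ≤ n) : ¬ HasClosedTour ![4, n] := by
  rintro ⟨x, w, hw⟩
  have hcyc : w.IsCycle := hw.isCycle
  have hnil : ¬ w.Nil := hcyc.not_nil
  -- the case n = 1 : there are no edges at all
  rcases eq_or_lt_of_le hn with h1 | h2
  · have hadj : (knightGraph ![4, n]).Adj x (w.getVert 1) := w.adj_snd hnil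
    have hd := knightMove_cases hadj
    have hcx := col_bounds (n := n) x
    have hcy := col_bounds (n := n) (w.getVert 1)
    rcases hd with ⟨_, hc⟩ | ⟨_, hc⟩ <;> omega
  -- main case : n ≥ 2
  classical
  set f : {a : Fin 2 → ℤ // onBoard ![4, n] a} → ℤ := wt with hf
  -- counts in the tail of the support
  have hcount : ∀ v, @List.count _ instBEqOfDecidableEq v w.support.tail = 1 :=
    ((Walk.isHamiltonianCycle_iff_isCycle_and_support_count_tail_eq_one).mp hw).2
  -- sum of f over the tail is zero, via the flipping involution
  set M : Multiset {a : Fin 2 → ℤ // onBoard ![4, n] a} := ↑(w.support.tail) with hM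
  have hMcount : ∀ v, M.count v = 1 := by
    intro v; simpa [hM, Multiset.coe_count] using hcount v
  have hflip_inj : Function.Injective (flipV (n := n)) := by
    intro a b hab
    have := congrArg (flipV (n := n)) hab
    rwa [flipV_flipV, flipV_flipV] at this
  have hMmap : M.map (flipV (n := n)) = M := by
    ext v
    rw [← flipV_flipV v, Multiset.count_map_eq_count' _ _ hflip_inj, flipV_flipV,
      hMcount, hMcount]
  have hsum0 : (M.map f).sum = 0 := by
    have h1 : (M.map f).sum = ((M.map (flipV (n := n))).map f).sum := by rw [hMmap]
    rw [Multiset.map_map] at h1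
    have h2 : (M.map (f ∘ flipV (n := n))).sum = - (M.map f).sum := by
      have heq : (f ∘ flipV (n := n)) = fun a => - f a := by
        funext a; exact wt_flipV a
      rw [heq]
      induction M using Multiset.induction with
      | empty => simp
      | cons a s ih => simp only [Multiset.map_cons, Multiset.sum_cons, ih]; ring
    omega
  have htailsum : (w.support.tail.map f).sum = 0 := by
    simpa [hM] using hsum0
  -- sum over darts
  have hdartsum : (w.darts.map (fun d => f d.fst + f d.snd)).sum = 0 := by
    have hsplit : (w.darts.map (fun d => f d.fst + f d.snd)).sum =
        (w.darts.map (fun d => f d.fst)).sum + (w.darts.map (fun d => f d.snd)).sum := by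
      induction w.darts with
      | nil => simp
      | cons d t ih => simp only [List.map_cons, List.sum_cons, ih]; ring
    have h1 : w.darts.map (fun d => f d.fst) = w.support.dropLast.map f := by
      rw [← w.map_fst_darts, List.map_map]; rfl
    have h2 : w.darts.map (fun d => f d.snd) = w.support.tail.map f := by
      rw [← w.map_snd_darts, List.map_map]; rfl
    rw [hsplit, h1, h2, closed_sum w hnil f, htailsum]
    norm_num
  -- each dart term is nonpositive
  have hle : ∀ y ∈ w.darts.map (fun d => f d.fst + f d.snd), y ≤ 0 := by
    rintro y hy
    obtain ⟨d, hd, rfl⟩ := List.mem_map.mp hy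
    have hno := no_outer_outer d.adj
    simp only [hf, wt]
    split_ifs with hA hB hB
    · exact absurd ⟨hA, hB⟩ hno
    · norm_num
    · norm_num
    · norm_num
  have hzero : ∀ d ∈ w.darts, f d.fst + f d.snd = 0 := by
    intro d hd
    exact list_sum_zero _ hle hdartsum _ (List.mem_map.mpr ⟨d, hd, rfl⟩)
  -- each dart flips outer status
  have houter : ∀ d ∈ w.darts, ¬ (isOuter d.fst ↔ isOuter d.snd) := by
    intro d hd h
    have := hzero d hd
    simp only [hf, wt] at this
    split_ifs at this with hA hB hB
    · omega
    · exact hB (h.mp hA)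
    · exact hA (h.mpr hB)
    · omega
  -- the combined boolean invariant
  set q : {a : Fin 2 → ℤ // onBoard ![4, n] a} → Bool :=
    fun a => decide (isOuter a) == decide (Even (a.1 0 + a.1 1)) with hq
  have hqdart : ∀ d ∈ w.darts, q d.fst = q d.snd := by
    intro d hd
    have h1 := houter d hd
    have h2 := parity_flip d.adj
    simp only [hq, Bool.beq_eq_decide_eq]
    by_cases hA : isOuter d.fst <;> by_cases hB : Even (d.fst.1 0 + d.fst.1 1) <;>
      by_cases hC : isOuter d.snd <;> by_cases hD : Even (d.snd.1 0 + d.snd.1 1) <;>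
      simp_all
  have hconst := walk_const w hqdart
  -- the two witnessing squares
  have h2n : (2 : ℤ) ≤ (n : ℤ) := by exact_mod_cast h2
  have hu1 : onBoard ![4, n] ![1, 1] := by
    intro i; fin_cases i <;> simp <;> omega
  have hu2 : onBoard ![4, n] ![1, 2] := by
    intro i; fin_cases i <;> simp <;> omega
  set u1 : {a : Fin 2 → ℤ // onBoard ![4, n] a} := ⟨![1, 1], hu1⟩
  set u2 : {a : Fin 2 → ℤ // onBoard ![4, n] a} := ⟨![1, 2], hu2⟩
  have hm1 : u1 ∈ w.support := hw.mem_support u1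
  have hm2 : u2 ∈ w.support := hw.mem_support u2
  have e1 : q u1 = q x := hconst u1 hm1
  have e2 : q u2 = q x := hconst u2 hm2
  have hv1 : q u1 = true := by
    simp only [hq, u1, isOuter]
    norm_num
  have hv2 : q u2 = false := by
    simp only [hq, u2, isOuter]
    norm_num [Int.even_iff]
  rw [hv1] at e1; rw [hv2] at e2
  exact absurd (e1.trans e2.symm) (by simp)
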